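/- arXiv:1410.2712 — 2 statements merged into one kernel-verified Lean document; each statement's English description precedes it below -/
import Mathlib

section
/- The postorder ordinal number of the dyadic interval I_{ℓ,k} in D_N is given by the explicit formula a^ℓ(k) = (k+1)(2^{N−ℓ+1} − 1) + Σ_{j=1}^{k} m(j), for 0 ≤ ℓ ≤ N and 0 ≤ k ≤ 2^ℓ − 1. -/
open Finset

/-- The set of dyadic intervals in `[0,1]` of length `≥ 2^{-N}`, encoded as
pairs `(ℓ, k)` with `ℓ ≤ N` and `k < 2^ℓ`, representing `I_{ℓ,k} = [k/2^ℓ, (k+1)/2^ℓ)`. -/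
def DN (N : ℕ) : Finset (ℕ × ℕ) :=
  (Finset.range (N + 1) ×ˢ Finset.range (2 ^ N)).filter fun p => p.2 < 2 ^ p.1

/-- `subInt q p` means the dyadic interval encoded by `q` is contained in the one
encoded by `p`. -/
def subInt (q p : ℕ × ℕ) : Prop := p.1 ≤ q.1 ∧ q.2 / 2 ^ (q.1 - p.1) = p.2

instance (q p : ℕ × ℕ) : Decidable (subInt q p) :=
  inferInstanceAs (Decidable (_ ∧ _))

/-- Postorder on dyadic intervals: `q ⪯ p` iff `q ⊆ p`, or they are disjoint with
`q` to the left of `p`. -/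
def postLE (q p : ℕ × ℕ) : Prop :=
  subInt q p ∨ (q.2 + 1) * 2 ^ p.1 ≤ p.2 * 2 ^ q.1

instance (q p : ℕ × ℕ) : Decidable (postLE q p) :=
  inferInstanceAs (Decidable (_ ∨ _))

/-- Lexicographic order: first by level, then by position. -/
def lexLE (q p : ℕ × ℕ) : Prop := q.1 < p.1 ∨ (q.1 = p.1 ∧ q.2 ≤ p.2)

instance (q p : ℕ × ℕ) : Decidable (lexLE q p) :=
  inferInstanceAs (Decidable (_ ∨ _))

/-- Postorder ordinal number (starting at 1) of the interval `p` in `D_N`. -/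
def postOrdinal (N : ℕ) (p : ℕ × ℕ) : ℕ :=
  ((DN N).filter fun q => postLE q p).card

/-- Lexicographic ordinal number (starting at 1) of the interval `p` in `D_N`. -/
def lexOrdinal (N : ℕ) (p : ℕ × ℕ) : ℕ :=
  ((DN N).filter fun q => lexLE q p).card

/- ### Auxiliary lemmas -/

lemma mem_DN' {N : ℕ} {p : ℕ × ℕ} : p ∈ DN N ↔ p.1 ≤ N ∧ p.2 < 2 ^ p.1 := by
  simp only [DN, mem_filter, mem_product, mem_range, Nat.lt_succ_iff]
  constructor
  · rintro ⟨⟨h1, _⟩, h3⟩; exact ⟨h1, h3⟩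
  · rintro ⟨h1, h2⟩
    exact ⟨⟨h1, lt_of_lt_of_le h2 (Nat.pow_le_pow_right (by norm_num) h1)⟩, h2⟩

lemma card_DN_filter (N : ℕ) (P : ℕ × ℕ → Prop) [DecidablePred P] :
    ((DN N).filter P).card
      = ∑ l ∈ Finset.range (N + 1), ((Finset.range (2 ^ l)).filter fun k' => P (l, k')).card := by
  rw [Finset.card_eq_sum_card_fiberwise (f := Prod.fst) (t := Finset.range (N + 1))
    (fun x hx => by
      rw [Finset.mem_coe, mem_filter, mem_DN'] at hx
      exact mem_range.2 (Nat.lt_succ_of_le hx.1.1))]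
  refine Finset.sum_congr rfl fun l hl => ?_
  rw [mem_range, Nat.lt_succ_iff] at hl
  apply Finset.card_bij (fun p _ => p.2)
  · rintro ⟨a, b⟩ hp
    simp only [mem_filter, mem_DN', mem_range] at hp ⊢
    obtain ⟨⟨⟨_, h2⟩, hP⟩, rfl⟩ := hp
    exact ⟨h2, hP⟩
  · rintro ⟨a₁, b₁⟩ h₁ ⟨a₂, b₂⟩ h₂ h
    have e1 : a₁ = l := (mem_filter.1 h₁).2
    have e2 : a₂ = l := (mem_filter.1 h₂).2
    simp only at h
    simp [Prod.ext_iff, e1, e2, h]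
  · intro b hb
    simp only [mem_filter, mem_range] at hb
    refine ⟨(l, b), ?_, rfl⟩
    simp only [mem_filter, mem_DN']
    exact ⟨⟨⟨hl, hb.1⟩, hb.2⟩, trivial⟩

lemma level_count (ℓ k l : ℕ) (hk : k < 2 ^ ℓ) :
    ((Finset.range (2 ^ l)).filter fun k' => postLE (l, k') (ℓ, k)).card
      = (if ℓ ≤ l then 2 ^ (l - ℓ) else 0) + k * 2 ^ l / 2 ^ ℓ := by
  have h2ℓ : (0 : ℕ) < 2 ^ ℓ := Nat.two_pow_pos ℓ
  have hsplit : ((Finset.range (2 ^ l)).filter fun k' => postLE (l, k') (ℓ, k))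
      = ((Finset.range (2 ^ l)).filter fun k' => subInt (l, k') (ℓ, k))
        ∪ ((Finset.range (2 ^ l)).filter fun k' => (k' + 1) * 2 ^ ℓ ≤ k * 2 ^ l) := by
    rw [← Finset.filter_or]; rfl
  have hdisj : Disjoint ((Finset.range (2 ^ l)).filter fun k' => subInt (l, k') (ℓ, k))
      ((Finset.range (2 ^ l)).filter fun k' => (k' + 1) * 2 ^ ℓ ≤ k * 2 ^ l) := by
    rw [Finset.disjoint_left]
    intro k' hA hB
    simp only [mem_filter] at hA hB
    simp only [subInt] at hA
    obtain ⟨_, hle', hdiv⟩ := hA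
    obtain ⟨_, hB⟩ := hB
    have h1 : k * 2 ^ (l - ℓ) ≤ k' := by
      rw [← hdiv]; exact Nat.div_mul_le_self _ _
    have h2 : k * 2 ^ l = k * 2 ^ (l - ℓ) * 2 ^ ℓ := by
      rw [mul_assoc, ← pow_add]
      congr 2
      omega
    rw [h2] at hB
    have h3 : k' + 1 ≤ k * 2 ^ (l - ℓ) := Nat.le_of_mul_le_mul_right hB h2ℓ
    omega
  have hB : ((Finset.range (2 ^ l)).filter fun k' => (k' + 1) * 2 ^ ℓ ≤ k * 2 ^ l).card
      = k * 2 ^ l / 2 ^ ℓ := by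
    have hbound : k * 2 ^ l / 2 ^ ℓ ≤ 2 ^ l := by
      calc k * 2 ^ l / 2 ^ ℓ ≤ 2 ^ ℓ * 2 ^ l / 2 ^ ℓ :=
            Nat.div_le_div_right (Nat.mul_le_mul_right _ (le_of_lt hk))
        _ = 2 ^ l := Nat.mul_div_cancel_left _ h2ℓ
    have hset : ((Finset.range (2 ^ l)).filter fun k' => (k' + 1) * 2 ^ ℓ ≤ k * 2 ^ l)
        = Finset.range (k * 2 ^ l / 2 ^ ℓ) := by
      ext k'
      simp only [mem_filter, mem_range]
      rw [← Nat.le_div_iff_mul_le h2ℓ]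
      omega
    rw [hset, Finset.card_range]
  rw [hsplit, Finset.card_union_of_disjoint hdisj, hB]
  congr 1
  by_cases hle : ℓ ≤ l
  · have hd : (0 : ℕ) < 2 ^ (l - ℓ) := Nat.two_pow_pos _
    have hub : (k + 1) * 2 ^ (l - ℓ) ≤ 2 ^ l := by
      calc (k + 1) * 2 ^ (l - ℓ) ≤ 2 ^ ℓ * 2 ^ (l - ℓ) := Nat.mul_le_mul_right _ hk
        _ = 2 ^ l := by rw [← pow_add]; congr 1; omega
    have hA : ((Finset.range (2 ^ l)).filter fun k' => subInt (l, k') (ℓ, k))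
        = Finset.Ico (k * 2 ^ (l - ℓ)) ((k + 1) * 2 ^ (l - ℓ)) := by
      ext k'
      simp only [mem_filter, mem_range, mem_Ico]
      simp only [subInt]
      have key : k' / 2 ^ (l - ℓ) = k ↔ k * 2 ^ (l - ℓ) ≤ k' ∧ k' < (k + 1) * 2 ^ (l - ℓ) := by
        rw [← Nat.le_div_iff_mul_le hd, ← Nat.div_lt_iff_lt_mul hd]
        omega
      rw [key]
      constructor
      · rintro ⟨_, _, h⟩; exact h
      · rintro ⟨ha, hb⟩; exact ⟨lt_of_lt_of_le hb hub, hle, ha, hb⟩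
    rw [hA, Nat.card_Ico, if_pos hle, add_one_mul, Nat.add_sub_cancel_left]
  · rw [if_neg hle]
    rw [Finset.card_eq_zero, Finset.filter_eq_empty_iff]
    intro k' _ hsub
    exact hle hsub.1

lemma geom2 (n : ℕ) : ∑ i ∈ Finset.range n, 2 ^ i = 2 ^ n - 1 := by
  induction n with
  | zero => simp
  | succ n ih =>
    rw [Finset.sum_range_succ, ih]
    have h1 : 1 ≤ 2 ^ n := Nat.one_le_two_pow
    have h2 : 2 ^ (n + 1) = 2 * 2 ^ n := by ring
    omega

lemma sum_padic (k : ℕ) :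
    ∑ j ∈ Finset.Icc 1 k, padicValNat 2 j = padicValNat 2 (Nat.factorial k) := by
  induction k with
  | zero => simp
  | succ k ih =>
    rw [Finset.sum_Icc_succ_top (by omega), ih, Nat.factorial_succ,
      padicValNat.mul (by omega) (Nat.factorial_ne_zero k)]
    omega

lemma legendre (ℓ k : ℕ) (hk : k < 2 ^ ℓ) :
    ∑ d ∈ Finset.Ico 1 (ℓ + 1), k / 2 ^ d = ∑ j ∈ Finset.Icc 1 k, padicValNat 2 j := by
  rw [sum_padic]
  rcases eq_or_ne k 0 with rfl | h
  · simp
  · rw [padicValNat_factorial (p := 2) (n := k) (b := ℓ + 1)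
      (Nat.log_lt_of_lt_pow h (lt_of_lt_of_le hk
        (Nat.pow_le_pow_right (by norm_num) (Nat.le_succ ℓ))))]

/-- Explicit formula for the postorder ordinal number:
`a^ℓ(k) = (k+1)(2^{N-ℓ+1} - 1) + Σ_{j=1}^k m(j)`, `m` being the 2-adic valuation. -/
theorem postOrdinal_formula (N ℓ k : ℕ) (hℓ : ℓ ≤ N) (hk : k ≤ 2 ^ ℓ - 1) :
    postOrdinal N (ℓ, k)
      = (k + 1) * (2 ^ (N - ℓ + 1) - 1) + ∑ j ∈ Finset.Icc 1 k, padicValNat 2 j := by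
  have hk' : k < 2 ^ ℓ := by
    have := Nat.one_le_two_pow (n := ℓ); omega
  have h2ℓ : (0 : ℕ) < 2 ^ ℓ := Nat.two_pow_pos ℓ
  rw [postOrdinal, card_DN_filter,
    Finset.sum_congr rfl fun l _ => level_count ℓ k l hk', Finset.sum_add_distrib]
  -- split both sums at ℓ
  have hsplit : ∀ f : ℕ → ℕ, ∑ l ∈ Finset.range (N + 1), f l
      = ∑ l ∈ Finset.range ℓ, f l + ∑ l ∈ Finset.Ico ℓ (N + 1), f l := by
    intro f
    rw [Finset.range_eq_Ico,
      ← Finset.sum_Ico_consecutive f (Nat.zero_le ℓ) (by omega : ℓ ≤ N + 1), ← Finset.range_eq_Ico]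
  have hgeom : ∑ l ∈ Finset.Ico ℓ (N + 1), 2 ^ (l - ℓ) = 2 ^ (N - ℓ + 1) - 1 := by
    rw [Finset.sum_Ico_eq_sum_range]
    have : ∀ i ∈ Finset.range (N + 1 - ℓ), 2 ^ (ℓ + i - ℓ) = 2 ^ i := by
      intro i _; congr 1; omega
    rw [Finset.sum_congr rfl this, geom2]
    congr 2
    omega
  have hsum1 : ∑ l ∈ Finset.range (N + 1), (if ℓ ≤ l then 2 ^ (l - ℓ) else 0)
      = 2 ^ (N - ℓ + 1) - 1 := by
    rw [hsplit]
    have e1 : ∑ l ∈ Finset.range ℓ, (if ℓ ≤ l then 2 ^ (l - ℓ) else 0) = 0 := by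
      apply Finset.sum_eq_zero
      intro l hl
      rw [mem_range] at hl
      rw [if_neg (by omega)]
    have e2 : ∑ l ∈ Finset.Ico ℓ (N + 1), (if ℓ ≤ l then 2 ^ (l - ℓ) else 0)
        = ∑ l ∈ Finset.Ico ℓ (N + 1), 2 ^ (l - ℓ) := by
      apply Finset.sum_congr rfl
      intro l hl
      rw [mem_Ico] at hl
      rw [if_pos hl.1]
    rw [e1, e2, hgeom, Nat.zero_add]
  have hsum2 : ∑ l ∈ Finset.range (N + 1), k * 2 ^ l / 2 ^ ℓ
      = ∑ j ∈ Finset.Icc 1 k, padicValNat 2 j + k * (2 ^ (N - ℓ + 1) - 1) := by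
    rw [hsplit]
    have e1 : ∑ l ∈ Finset.range ℓ, k * 2 ^ l / 2 ^ ℓ
        = ∑ j ∈ Finset.Icc 1 k, padicValNat 2 j := by
      have step : ∀ l ∈ Finset.range ℓ, k * 2 ^ l / 2 ^ ℓ = k / 2 ^ (ℓ - l) := by
        intro l hl
        rw [mem_range] at hl
        have : (2 : ℕ) ^ ℓ = 2 ^ (ℓ - l) * 2 ^ l := by rw [← pow_add]; congr 1; omega
        rw [this, Nat.mul_div_mul_right k _ (Nat.two_pow_pos l)]
      rw [Finset.sum_congr rfl step, ← legendre ℓ k hk']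
      rw [← Finset.sum_range_reflect]
      rw [Finset.sum_Ico_eq_sum_range]
      have : ℓ + 1 - 1 = ℓ := by omega
      rw [this]
      apply Finset.sum_congr rfl
      intro j hj
      rw [mem_range] at hj
      congr 2
      omega
    have e2 : ∑ l ∈ Finset.Ico ℓ (N + 1), k * 2 ^ l / 2 ^ ℓ
        = k * (2 ^ (N - ℓ + 1) - 1) := by
      have step : ∀ l ∈ Finset.Ico ℓ (N + 1), k * 2 ^ l / 2 ^ ℓ = k * 2 ^ (l - ℓ) := by
        intro l hl
        rw [mem_Ico] at hl
        have : (2 : ℕ) ^ l = 2 ^ (l - ℓ) * 2 ^ ℓ := by rw [← pow_add]; congr 1; omega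
        rw [this, ← mul_assoc, Nat.mul_div_cancel _ h2ℓ]
      rw [Finset.sum_congr rfl step, ← Finset.mul_sum, hgeom]
    rw [e1, e2]
  rw [hsum1, hsum2]
  ring
end

section
/- With a^ℓ(k) as below, a^ℓ(2^s − 1) = 2^{N−ℓ+s+1} − s − 1 for all 1 ≤ s ≤ ℓ ≤ N. -/
lemma sum_padic_eq_factorial (n : ℕ) :
    ∑ j ∈ Finset.Icc 1 n, padicValNat 2 j = padicValNat 2 (Nat.factorial n) := by
  induction n with
  | zero => simp
  | succ n ih =>
    rw [Finset.sum_Icc_succ_top (by omega), ih, Nat.factorial_succ,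
      padicValNat.mul (by omega) (Nat.factorial_ne_zero n), add_comm]

lemma digit_sum_pow_sub_one (s : ℕ) : (Nat.digits 2 (2 ^ s - 1)).sum = s := by
  induction s with
  | zero => simp
  | succ s ih =>
    have hp : 1 ≤ (2:ℕ) ^ s := Nat.one_le_two_pow
    have h2 : (2 : ℕ) ^ (s + 1) - 1 = 2 * (2 ^ s - 1) + 1 := by
      ring_nf; omega
    rw [h2, Nat.digits_def' (by norm_num) (by omega)]
    simp [Nat.mul_add_div, Nat.mul_add_mod, ih]
    omega

lemma sum_padic_pow (s : ℕ) :
    ∑ j ∈ Finset.Icc 1 (2 ^ s - 1), padicValNat 2 j = 2 ^ s - 1 - s := by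
  have h := sub_one_mul_padicValNat_factorial (p := 2) (2 ^ s - 1)
  rw [digit_sum_pow_sub_one] at h
  rw [sum_padic_eq_factorial]
  omega

/-- The explicit formula for the postorder ordinal number of `I_{ℓ,k}` in `D_N`:
`a^ℓ(k) = (k+1)(2^{N-ℓ+1} - 1) + Σ_{j=1}^k m(j)`, where `m(j) = padicValNat 2 j`
is the 2-adic valuation of `j` (zero for odd `j`). -/
def aPost (N ℓ k : ℕ) : ℕ :=
  (k + 1) * (2 ^ (N - ℓ + 1) - 1) + ∑ j ∈ Finset.Icc 1 k, padicValNat 2 j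

/-- `a^ℓ(2^s - 1) = 2^{N-ℓ+s+1} - s - 1` for `1 ≤ s ≤ ℓ ≤ N`. -/
theorem aPost_pow_sub_one (N ℓ s : ℕ) (hs : 1 ≤ s) (hsℓ : s ≤ ℓ) (hℓ : ℓ ≤ N) :
    aPost N ℓ (2 ^ s - 1) = 2 ^ (N - ℓ + s + 1) - s - 1 := by
  unfold aPost
  rw [sum_padic_pow]
  have hp : 1 ≤ (2:ℕ) ^ s := Nat.one_le_two_pow
  have h1 : 2 ^ s - 1 + 1 = 2 ^ s := by omega
  rw [h1, Nat.mul_sub, mul_one, ← pow_add]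
  have he : s + (N - ℓ + 1) = N - ℓ + s + 1 := by omega
  rw [he]
  have hle : (2:ℕ) ^ s ≤ 2 ^ (N - ℓ + s + 1) :=
    Nat.pow_le_pow_right (by norm_num) (by omega)
  have hs2 : s + 1 ≤ 2 ^ s := Nat.lt_two_pow_self (n := s)
  omega
end
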